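/- For any element w of a Coxeter group W acting on its root system, the inversion set Φ_w = Φ⁺ ∩ w(Φ⁻) is closed: if α, β ∈ Φ_w and a, b are nonnegative reals with aα + bβ ∈ Φ⁺, then aα + bβ ∈ Φ_w. -/
import Mathlib


/-- For a Coxeter group `W` with its standard geometric representation
`ρ` on a real vector space `V`, simple roots `αs : B → V`, root system
`Φ = W(Δ)`, positive roots `Φ⁺` (the roots that are nonnegative combinations of
simple roots), and negative roots `-Φ⁺` (with `Φ = Φ⁺ ⊔ -Φ⁺`), the inversion
set `Φ_w = Φ⁺ ∩ w(Φ⁻)` is closed: if `α, β ∈ Φ_w` and `a, b ≥ 0` with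
`a•α + b•β ∈ Φ⁺`, then `a•α + b•β ∈ Φ_w`. -/
theorem inversion_set_closed {B W V : Type*} [Group W] [AddCommGroup V] [Module ℝ V]
    (M : CoxeterMatrix B) (cs : CoxeterSystem M W)
    (ρ : W →* (V ≃ₗ[ℝ] V)) (αs : B → V)
    (Φ : Set V) (hΦ : Φ = {v | ∃ (w : W) (i : B), v = ρ w (αs i)})
    (Φpos : Set V)
    (hΦpos : Φpos = Φ ∩ {v | ∃ c : B →₀ ℝ, (∀ i, 0 ≤ c i) ∧ v = c.sum fun i r => r • αs i})
    (hsplit : Φ = Φpos ∪ (-Φpos)) (hdisj : Φpos ∩ (-Φpos) = ∅)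
    (w : W) (α β : V)
    (hα : α ∈ Φpos ∩ (ρ w '' (-Φpos))) (hβ : β ∈ Φpos ∩ (ρ w '' (-Φpos)))
    (a b : ℝ) (ha : 0 ≤ a) (hb : 0 ≤ b)
    (hsum : a • α + b • β ∈ Φpos) :
    a • α + b • β ∈ Φpos ∩ (ρ w '' (-Φpos)) := by
  obtain ⟨hαpos, α', hα', hαeq⟩ := hα
  obtain ⟨hβpos, β', hβ', hβeq⟩ := hβ
  set x : V := a • α' + b • β' with hxdef
  have hρwx : ρ w x = a • α + b • β := by
    simp [hxdef, map_add, map_smul, hαeq, hβeq]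
  -- x is a root
  have hxΦ : x ∈ Φ := by
    have hmem : a • α + b • β ∈ Φ := by
      rw [hΦpos] at hsum; exact hsum.1
    rw [hΦ] at hmem
    obtain ⟨u, i, hui⟩ := hmem
    have : x = ρ (w⁻¹ * u) (αs i) := by
      have : ρ w x = ρ w (ρ (w⁻¹ * u) (αs i)) := by
        rw [hρwx, hui, map_mul, map_inv]
        show ρ u (αs i) = ρ w ((ρ w).symm (ρ u (αs i)))
        rw [LinearEquiv.apply_symm_apply]
      exact (ρ w).injective this
    rw [hΦ]
    exact ⟨w⁻¹ * u, i, this⟩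
  -- x is either positive or negative
  rw [hsplit] at hxΦ
  rcases hxΦ with hxpos | hxneg
  · -- impossible: then -x would also be positive
    exfalso
    have hxΦ' : x ∈ Φ := by rw [hΦpos] at hxpos; exact hxpos.1
    have hnegxΦ : -x ∈ Φ := by
      rw [hsplit]
      right
      rwa [Set.mem_neg, neg_neg]
    -- -x is a nonneg combination of simple roots
    have hα'c : -α' ∈ Φpos := by rwa [Set.mem_neg] at hα'
    have hβ'c : -β' ∈ Φpos := by rwa [Set.mem_neg] at hβ'
    rw [hΦpos] at hα'c hβ'c
    obtain ⟨c, hc0, hcsum⟩ := hα'c.2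
    obtain ⟨d, hd0, hdsum⟩ := hβ'c.2
    have hnegx : -x ∈ Φpos := by
      rw [hΦpos]
      refine ⟨hnegxΦ, a • c + b • d, ?_, ?_⟩
      · intro i
        simp only [Finsupp.coe_add, Finsupp.coe_smul, Pi.add_apply, Pi.smul_apply,
          smul_eq_mul]
        exact add_nonneg (mul_nonneg ha (hc0 i)) (mul_nonneg hb (hd0 i))
      · have h1 : (a • c).sum (fun i r => r • αs i) = a • (-α') := by
          rw [Finsupp.sum_smul_index' (by simp)]
          rw [hcsum, Finsupp.smul_sum]
          simp [mul_smul]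
        have h2 : (b • d).sum (fun i r => r • αs i) = b • (-β') := by
          rw [Finsupp.sum_smul_index' (by simp)]
          rw [hdsum, Finsupp.smul_sum]
          simp [mul_smul]
        rw [Finsupp.sum_add_index' (by simp) (by intros; rw [add_smul]), h1, h2]
        simp [hxdef]
        abel
    have : x ∈ Φpos ∩ (-Φpos) := ⟨hxpos, by rwa [Set.mem_neg]⟩
    rw [hdisj] at this
    exact this
  · exact ⟨hsum, x, hxneg, hρwx⟩
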